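/- Let B = (b_{ij}) be an n×n integer skew-symmetric matrix such that Q(B) has no 3-cycles, i.e., there is no triple of indices i, j, l with b_{ij} > 0, b_{jl} > 0 and b_{li} > 0, and fix k ∈ {1,…,n}. Then μ_k(B) and B have the same characteristic polynomial if and only if k is a sink or a source of Q(B), i.e., b_{ik} ≥ 0 for all i, or b_{ik} ≤ 0 for all i. -/

import Mathlib

def mutate {n : ℕ} (B : Matrix (Fin n) (Fin n) ℤ) (k : Fin n) :
    Matrix (Fin n) (Fin n) ℤ :=
  Matrix.of fun i j =>
    if i = k ∨ j = k then -B i j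
    else B i j + Int.sign (B i k) * max (B i k * B k j) 0

open Finset Polynomial

lemma sign_max_eq (x y : ℤ) :
    Int.sign x * max (x * y) 0 = Int.sign y * max (x * y) 0 := by
  rcases lt_trichotomy x 0 with hx | hx | hx <;> rcases lt_trichotomy y 0 with hy | hy | hy <;>
    simp [hx, hy, Int.sign_eq_one_of_pos, Int.sign_eq_neg_one_of_neg] <;>
    first
      | (rw [max_eq_right (le_of_lt (mul_neg_of_pos_of_neg hx hy))]; ring)
      | (rw [max_eq_right (le_of_lt (mul_neg_of_neg_of_pos hx hy))]; ring)
      | skip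

lemma mutate_apply_or {n : ℕ} (B : Matrix (Fin n) (Fin n) ℤ) {k i j : Fin n}
    (h : i = k ∨ j = k) : mutate B k i j = -B i j := by
  simp only [mutate, Matrix.of_apply, if_pos h]

lemma mutate_apply_not {n : ℕ} (B : Matrix (Fin n) (Fin n) ℤ) {k i j : Fin n}
    (hi : i ≠ k) (hj : j ≠ k) :
    mutate B k i j = B i j + Int.sign (B i k) * max (B i k * B k j) 0 := by
  simp only [mutate, Matrix.of_apply, if_neg (by tauto : ¬(i = k ∨ j = k))]

lemma mutate_skew {n : ℕ} (B : Matrix (Fin n) (Fin n) ℤ)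
    (hskew : ∀ i j, B j i = -B i j) (k i j : Fin n) :
    mutate B k j i = -(mutate B k i j) := by
  have hBkk : B k k = 0 := by have := hskew k k; omega
  by_cases hi : i = k <;> by_cases hj : j = k
  · rw [mutate_apply_or B (Or.inl hj), mutate_apply_or B (Or.inl hi), hskew i j]
  · rw [mutate_apply_or B (Or.inr hi), mutate_apply_or B (Or.inl hi), hskew i j]
  · rw [mutate_apply_or B (Or.inl hj), mutate_apply_or B (Or.inr hj), hskew i j]
  · rw [mutate_apply_not B (by tauto) (by tauto), mutate_apply_not B (by tauto) (by tauto)]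
    rw [hskew i j, hskew i k, hskew k j, Int.sign_neg, neg_mul_neg, mul_comm (B k j)]
    have h := sign_max_eq (B i k) (B k j)
    linarith [h]

lemma mutate_diag {n : ℕ} (B : Matrix (Fin n) (Fin n) ℤ)
    (hskew : ∀ i j, B j i = -B i j) (k i : Fin n) :
    mutate B k i i = 0 := by
  have h := mutate_skew B hskew k i i
  omega

lemma Bdiag {n : ℕ} (B : Matrix (Fin n) (Fin n) ℤ)
    (hskew : ∀ i j, B j i = -B i j) (i : Fin n) : B i i = 0 := by
  have := hskew i i; omega

/-- Backward direction: sink or source implies same charpoly, via conjugation by a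
sign-flip diagonal matrix. -/
lemma charpoly_mutate_of_sink_source {n : ℕ} (B : Matrix (Fin n) (Fin n) ℤ)
    (hskew : ∀ i j, B j i = -B i j) (k : Fin n)
    (h : (∀ i, 0 ≤ B i k) ∨ (∀ i, B i k ≤ 0)) :
    Matrix.charpoly (mutate B k) = Matrix.charpoly B := by
  classical
  set d : Fin n → ℤ[X] := fun i => if i = k then -1 else 1 with hdname
  have hmax : ∀ i j : Fin n, Int.sign (B i k) * max (B i k * B k j) 0 = 0 := by
    intro i j
    have hkj : B k j = -B j k := hskew j k
    have h1 : B i k * B k j ≤ 0 := by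
      rw [hkj]
      rcases h with h | h
      · have := h i; have := h j; nlinarith
      · have := h i; have := h j; nlinarith
    rw [max_eq_right h1, mul_zero]
  have hcm : Matrix.charmatrix (mutate B k) =
      Matrix.diagonal d * Matrix.charmatrix B * Matrix.diagonal d := by
    refine Matrix.ext fun i j => ?_
    rw [Matrix.mul_diagonal, Matrix.diagonal_mul]
    by_cases hij : i = j
    · subst hij
      have hmm : mutate B k i i = 0 := mutate_diag B hskew k i
      have hbb : B i i = 0 := Bdiag B hskew i
      rw [Matrix.charmatrix_apply_eq, Matrix.charmatrix_apply_eq, hmm, hbb]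
      by_cases hik : i = k <;> simp [hdname, hik] <;> ring
    · rw [Matrix.charmatrix_apply_ne _ _ _ hij, Matrix.charmatrix_apply_ne _ _ _ hij]
      by_cases hik : i = k
      · have hjk : j ≠ k := fun hh => hij (hik.trans hh.symm)
        rw [mutate_apply_or B (Or.inl hik)]
        simp only [hdname, if_pos hik, if_neg hjk, map_neg]
        ring
      · by_cases hjk : j = k
        · rw [mutate_apply_or B (Or.inr hjk)]
          simp only [hdname, if_pos hjk, if_neg hik, map_neg]
          ring
        · rw [mutate_apply_not B hik hjk, hmax i j, add_zero]
          simp only [hdname, if_neg hik, if_neg hjk]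
          ring
  rw [Matrix.charpoly, Matrix.charpoly, hcm, Matrix.det_mul, Matrix.det_mul]
  have hdd : (Matrix.diagonal d).det * (Matrix.diagonal d).det = 1 := by
    rw [← Matrix.det_mul, Matrix.diagonal_mul_diagonal, Matrix.det_diagonal]
    refine Finset.prod_eq_one fun i _ => ?_
    by_cases hik : i = k <;> simp [hdname, hik]
  calc (Matrix.diagonal d).det * (Matrix.charmatrix B).det * (Matrix.diagonal d).det
      = (Matrix.charmatrix B).det * ((Matrix.diagonal d).det * (Matrix.diagonal d).det) := by
        ring
    _ = (Matrix.charmatrix B).det := by rw [hdd, mul_one]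

/-- The coefficient of `X^(n-2)` in the char. polynomial of a zero-diagonal matrix,
as a sum over transpositions. -/
lemma charpoly_coeff_sub_two {n : ℕ} (hn : 2 ≤ n) (M : Matrix (Fin n) (Fin n) ℤ)
    (hd : ∀ i, M i i = 0) :
    M.charpoly.coeff (n - 2) =
      ∑ σ ∈ Finset.univ.filter (fun σ : Equiv.Perm (Fin n) => σ.support.card = 2),
        ((Equiv.Perm.sign σ : ℤ) * ∏ l ∈ σ.support, (-(M (σ l) l))) := by
  rw [Matrix.charpoly, Matrix.det_apply, Polynomial.finset_sum_coeff, Finset.sum_filter]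
  refine Finset.sum_congr rfl fun σ _ => ?_
  have hprod : (∏ i, Matrix.charmatrix M (σ i) i)
      = X ^ (n - σ.support.card) * C (∏ l ∈ σ.support, (-(M (σ l) l))) := by
    rw [← Finset.prod_compl_mul_prod σ.support]
    congr 1
    · calc (∏ i ∈ σ.supportᶜ, Matrix.charmatrix M (σ i) i)
          = ∏ _i ∈ σ.supportᶜ, (X : ℤ[X]) := by
            refine Finset.prod_congr rfl fun i hi => ?_
            have h1 : σ i = i := Equiv.Perm.notMem_support.mp (Finset.mem_compl.mp hi)
            rw [h1, Matrix.charmatrix_apply_eq, hd, map_zero, sub_zero]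
        _ = X ^ (n - σ.support.card) := by
            rw [Finset.prod_const, Finset.card_compl, Fintype.card_fin]
    · rw [map_prod]
      refine Finset.prod_congr rfl fun l hl => ?_
      have h1 : σ l ≠ l := Equiv.Perm.mem_support.mp hl
      rw [Matrix.charmatrix_apply_ne _ _ _ h1, map_neg]
  rw [hprod, Polynomial.coeff_smul, mul_comm (X ^ (n - σ.support.card)),
    Polynomial.coeff_C_mul, Polynomial.coeff_X_pow]
  have hcard : σ.support.card ≤ n := by
    simpa [Fintype.card_fin] using Finset.card_le_univ σ.support
  by_cases h2 : σ.support.card = 2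
  · rw [if_pos h2, if_pos (by omega), mul_one, Units.smul_def, zsmul_eq_mul]
    norm_cast
  · rw [if_neg h2, if_neg (by omega), mul_zero, smul_zero]

lemma swap_term {n : ℕ} (M : Matrix (Fin n) (Fin n) ℤ) (a b : Fin n) (hab : a ≠ b) :
    ((Equiv.Perm.sign (Equiv.swap a b) : ℤ) *
      ∏ l ∈ (Equiv.swap a b).support, (-(M ((Equiv.swap a b) l) l))) = -(M a b * M b a) := by
  rw [Equiv.Perm.support_swap hab, Equiv.Perm.sign_swap hab]
  rw [Finset.prod_insert (by simp [hab]), Finset.prod_singleton,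
    Equiv.swap_apply_left, Equiv.swap_apply_right]
  push_cast
  ring

/-- Key positivity: the cross term is nonnegative thanks to the no-3-cycle condition. -/
lemma cross_nonneg {n : ℕ} (B : Matrix (Fin n) (Fin n) ℤ)
    (hskew : ∀ i j, B j i = -B i j)
    (hno3cycle : ¬ ∃ i j l : Fin n, 0 < B i j ∧ 0 < B j l ∧ 0 < B l i)
    (k a b : Fin n) :
    0 ≤ B a b * (Int.sign (B a k) * max (B a k * B k b) 0) := by
  rcases le_or_gt (B a k * B k b) 0 with hp | hp
  · rw [max_eq_right hp, mul_zero, mul_zero]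
  · rw [max_eq_left hp.le]
    rcases lt_trichotomy (B a k) 0 with hak | hak | hak
    · -- B a k < 0, so B k b < 0; then k→a and b→k arrows; no cycle forces B a b ≤ 0
      have hkb : B k b < 0 := by nlinarith
      have hka : 0 < B k a := by have := hskew a k; omega
      have hbk : 0 < B b k := by have := hskew k b; omega
      have hab : B a b ≤ 0 := by
        by_contra hcon
        exact hno3cycle ⟨a, b, k, by omega, hbk, hka⟩
      rw [Int.sign_eq_neg_one_of_neg hak]
      nlinarith
    · exfalso; rw [hak, zero_mul] at hp; exact lt_irrefl 0 hp
    · -- B a k > 0, so B k b > 0; no cycle forces B b a ≤ 0, i.e. B a b ≥ 0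
      have hkb : 0 < B k b := by nlinarith
      have hab : 0 ≤ B a b := by
        by_contra hcon
        push_neg at hcon
        have hba : 0 < B b a := by have := hskew a b; omega
        exact hno3cycle ⟨a, k, b, hak, hkb, hba⟩
      rw [Int.sign_eq_one_of_pos hak]
      nlinarith

theorem stmt15 {n : ℕ} (B : Matrix (Fin n) (Fin n) ℤ)
    (hskew : ∀ i j, B j i = -B i j)
    (hno3cycle : ¬ ∃ i j l : Fin n, 0 < B i j ∧ 0 < B j l ∧ 0 < B l i)
    (k : Fin n) :
    Matrix.charpoly (mutate B k) = Matrix.charpoly B ↔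
      ((∀ i, 0 ≤ B i k) ∨ (∀ i, B i k ≤ 0)) := by
  classical
  constructor
  · intro h
    by_contra hc
    push_neg at hc
    obtain ⟨⟨j₀, hj₀⟩, ⟨i₀, hi₀⟩⟩ := hc
    -- B j₀ k < 0, 0 < B i₀ k
    have hij : i₀ ≠ j₀ := by intro hh; rw [hh] at hi₀; omega
    have hik : i₀ ≠ k := by intro hh; rw [hh] at hi₀; have := Bdiag B hskew k; omega
    have hjk : j₀ ≠ k := by intro hh; rw [hh] at hj₀; have := Bdiag B hskew k; omega
    have hn : 2 ≤ n := by
      rcases n with _ | _ | m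
      · exact i₀.elim0
      · refine absurd (Fin.ext ?_) hij
        have h1 := i₀.isLt
        have h2 := j₀.isLt
        omega
      · omega
    -- coefficient equality
    have hco := congrArg (fun p => Polynomial.coeff p (n - 2)) h
    rw [charpoly_coeff_sub_two hn (mutate B k) (mutate_diag B hskew k),
      charpoly_coeff_sub_two hn B (Bdiag B hskew)] at hco
    -- pointwise inequality
    have hle : ∀ σ ∈ Finset.univ.filter
        (fun σ : Equiv.Perm (Fin n) => σ.support.card = 2),
        ((Equiv.Perm.sign σ : ℤ) * ∏ l ∈ σ.support, (-(B (σ l) l))) ≤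
        ((Equiv.Perm.sign σ : ℤ) * ∏ l ∈ σ.support, (-(mutate B k (σ l) l))) := by
      intro σ hσ
      have hsw : σ.IsSwap := Equiv.Perm.card_support_eq_two.mp (Finset.mem_filter.mp hσ).2
      obtain ⟨a, b, hab, rfl⟩ := hsw
      rw [swap_term B a b hab, swap_term (mutate B k) a b hab]
      rw [hskew a b, mutate_skew B hskew k a b]
      -- goal: -(B a b * -B a b) ≤ -(B' a b * -B' a b), i.e. squares
      by_cases hcase : a = k ∨ b = k
      · rw [mutate_apply_or B hcase]; ring_nf; exact le_refl _
      · push_neg at hcase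
        rw [mutate_apply_not B hcase.1 hcase.2]
        have := cross_nonneg B hskew hno3cycle k a b
        nlinarith [sq_nonneg (Int.sign (B a k) * max (B a k * B k b) 0)]
    have heq := (Finset.sum_eq_sum_iff_of_le hle).mp hco.symm
    -- apply to the swap of i₀ j₀
    have hmem : Equiv.swap i₀ j₀ ∈ Finset.univ.filter
        (fun σ : Equiv.Perm (Fin n) => σ.support.card = 2) := by
      simp only [Finset.mem_filter, Finset.mem_univ, true_and]
      exact Equiv.Perm.card_support_swap hij
    have hval := heq (Equiv.swap i₀ j₀) hmem
    rw [swap_term B i₀ j₀ hij, swap_term (mutate B k) i₀ j₀ hij] at hval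
    rw [hskew i₀ j₀, mutate_skew B hskew k i₀ j₀] at hval
    have hmut : mutate B k i₀ j₀
        = B i₀ j₀ + Int.sign (B i₀ k) * max (B i₀ k * B k j₀) 0 :=
      mutate_apply_not B hik hjk
    have hkj : 0 < B k j₀ := by have := hskew j₀ k; omega
    have ht : Int.sign (B i₀ k) * max (B i₀ k * B k j₀) 0 = B i₀ k * B k j₀ := by
      rw [Int.sign_eq_one_of_pos hi₀, max_eq_left (by positivity), one_mul]
    have htpos : 0 < B i₀ k * B k j₀ := by positivity
    have hab : 0 ≤ B i₀ j₀ := by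
      by_contra hcon
      push_neg at hcon
      have hba : 0 < B j₀ i₀ := by have := hskew i₀ j₀; omega
      exact hno3cycle ⟨i₀, k, j₀, hi₀, hkj, hba⟩
    rw [hmut, ht] at hval
    nlinarith
  · exact charpoly_mutate_of_sink_source B hskew k
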